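/- Let n be a finite-dimensional real 2-step nilpotent Lie algebra with a nondegenerate symmetric bilinear form ⟨·,·⟩ whose restrictions to the center z and to v = z^⊥ are nondegenerate, with j-maps j(z) : v → v defined by ⟨[x,y], z⟩ = ⟨y, j(z)x⟩. Let c ∈ ℝ, and suppose that for every z ∈ z with ⟨z, z⟩ = ±1 and every x ∈ v with ⟨x, x⟩ = ±1 one has ⟨j(z)x, j(z)x⟩ = 4c·⟨z, z⟩·⟨x, x⟩ (i.e. every nondegenerate semi-central plane has constant sectional curvature c). Then j(z)² = −4c·⟨z, z⟩·Id_v for all z ∈ z; that is, (n, ⟨·,·⟩, φ) is of modified H-type with quadratic form φ(z) = 4c·⟨z, z⟩. -/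

import Mathlib

/-- If every nondegenerate semi-central plane has constant
sectional curvature c, i.e. ⟨j(z)x, j(z)x⟩ = 4c·⟨z,z⟩·⟨x,x⟩ for all unit
z ∈ 𝔷 and unit x ∈ 𝔳, then j(z)² = −4c·⟨z,z⟩·Id for all z ∈ 𝔷, i.e. the group
is of modified H-type with φ(z) = 4c·⟨z,z⟩. -/
theorem constant_semicentral_curvature_implies_modified_H_type
    {n : Type*} [LieRing n] [LieAlgebra ℝ n] [FiniteDimensional ℝ n]
    (B : LinearMap.BilinForm ℝ n)
    (hBsymm : ∀ a b : n, B a b = B b a)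
    (hBnd : B.Nondegenerate)
    (Z : Submodule ℝ n)
    (hZ : Z = LieSubmodule.toSubmodule (LieAlgebra.center ℝ n))
    (h2step : ∀ a b : n, ⁅a, b⁆ ∈ Z)
    (V : Submodule ℝ n)
    (hV : V = B.orthogonal Z)
    (hZnd : (B.restrict Z).Nondegenerate)
    (hVnd : (B.restrict V).Nondegenerate)
    (j : Z →ₗ[ℝ] V →ₗ[ℝ] V)
    (hj : ∀ (z : Z) (x y : V), B ⁅(x : n), (y : n)⁆ (z : n) = B (y : n) ((j z x : V) : n))
    (c : ℝ)
    (hK : ∀ (z : Z) (x : V),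
      (B (z : n) (z : n) = 1 ∨ B (z : n) (z : n) = -1) →
      (B (x : n) (x : n) = 1 ∨ B (x : n) (x : n) = -1) →
      B ((j z x : V) : n) ((j z x : V) : n) = 4 * c * B (z : n) (z : n) * B (x : n) (x : n)) :
    ∀ z : Z, (j z) ∘ₗ (j z) = (-(4 * c * B (z : n) (z : n))) • (LinearMap.id : V →ₗ[ℝ] V) := by
  classical
  -- expansion of the quadratic form
  have hexpand : ∀ u w : n, B (u + w) (u + w) = B u u + 2 * B u w + B w w := by
    intro u w
    have h := hBsymm w u
    simp only [map_add, LinearMap.add_apply]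
    linarith
  -- skew-adjointness of j z
  have hskew : ∀ (z : Z) (x y : V),
      B ((j z x : V) : n) ((j z y : V) : n) = - B ((j z (j z x) : V) : n) (y : n) := by
    intro z x y
    have h1 := hj z y (j z x)
    have h2 := hj z (j z x) y
    have h3 : (⁅((y : V) : n), ((j z x : V) : n)⁆ : n) = -⁅((j z x : V) : n), ((y : V) : n)⁆ := by
      rw [← lie_skew]
    rw [h3] at h1
    simp only [map_neg, LinearMap.neg_apply] at h1
    rw [h2] at h1
    calc B ((j z x : V) : n) ((j z y : V) : n)
        = - B ((y : V) : n) ((j z (j z x) : V) : n) := h1.symm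
      _ = - B ((j z (j z x) : V) : n) (y : n) := by rw [hBsymm]
  -- if a nondegenerate restricted form has no anisotropic vector, the submodule is trivial
  have hzero : ∀ (W : Submodule ℝ n), (B.restrict W).Nondegenerate →
      (¬ ∃ w : W, B (w : n) (w : n) ≠ 0) → ∀ w : W, w = 0 := by
    intro W hW h w
    push_neg at h
    apply hW.1
    intro u
    have h1 := h (w + u)
    have h2 := h w
    have h3 := h u
    have h4 := hexpand (w : n) (u : n)
    simp only [Submodule.coe_add] at h1
    rw [h1, h2, h3] at h4
    show B (w : n) (u : n) = 0
    linarith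
  -- choice of good parameters
  have hpick : ∀ p q : ℝ, q ≠ 0 → ∃ t1 t2 : ℝ, t1 ≠ t2 ∧ t1 ≠ 0 ∧ t2 ≠ 0 ∧
      p + t1 * q ≠ 0 ∧ p + t2 * q ≠ 0 := by
    intro p q hq
    by_cases h1 : p + 1 * q = 0
    · refine ⟨2, 3, by norm_num, by norm_num, by norm_num, ?_, ?_⟩
      · intro h; apply hq; linarith
      · intro h; apply hq; linarith
    · by_cases h2 : p + 2 * q = 0
      · refine ⟨1, 3, by norm_num, by norm_num, by norm_num, h1, ?_⟩
        intro h; apply hq; linarith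
      · exact ⟨1, 2, by norm_num, by norm_num, by norm_num, h1, h2⟩
  -- case: both z and x anisotropic
  have hbothunit : ∀ (z : Z) (x : V), B (z : n) (z : n) ≠ 0 → B (x : n) (x : n) ≠ 0 →
      B ((j z x : V) : n) ((j z x : V) : n) = 4 * c * B (z : n) (z : n) * B (x : n) (x : n) := by
    intro z x hz hx
    set s := B (z : n) (z : n) with hs
    set u := B (x : n) (x : n) with hu
    set a : ℝ := (Real.sqrt |s|)⁻¹ with ha
    set b : ℝ := (Real.sqrt |u|)⁻¹ with hb
    have hsa : a * a = |s|⁻¹ := by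
      rw [ha, ← mul_inv, Real.mul_self_sqrt (abs_nonneg s)]
    have hub : b * b = |u|⁻¹ := by
      rw [hb, ← mul_inv, Real.mul_self_sqrt (abs_nonneg u)]
    have habs : |s| ≠ 0 := abs_ne_zero.mpr hz
    have hubs : |u| ≠ 0 := abs_ne_zero.mpr hx
    have hzs : B ((a • z : Z) : n) ((a • z : Z) : n) = |s|⁻¹ * s := by
      simp only [Submodule.coe_smul, map_smul, LinearMap.smul_apply, smul_eq_mul]
      rw [← hs, ← hsa]; ring
    have hxs : B ((b • x : V) : n) ((b • x : V) : n) = |u|⁻¹ * u := by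
      simp only [Submodule.coe_smul, map_smul, LinearMap.smul_apply, smul_eq_mul]
      rw [← hu, ← hub]; ring
    have hzc : |s|⁻¹ * s = 1 ∨ |s|⁻¹ * s = -1 := by
      rcases hz.lt_or_gt with h | h
      · right; rw [abs_of_neg h]; field_simp
      · left; rw [abs_of_pos h]; field_simp
    have hxc : |u|⁻¹ * u = 1 ∨ |u|⁻¹ * u = -1 := by
      rcases hx.lt_or_gt with h | h
      · right; rw [abs_of_neg h]; field_simp
      · left; rw [abs_of_pos h]; field_simp
    have hKey := hK (a • z) (b • x) (by rw [hzs]; exact hzc) (by rw [hxs]; exact hxc)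
    rw [hzs, hxs] at hKey
    have hjsc : ((j (a • z) (b • x) : V) : n) = (a * b) • ((j z x : V) : n) := by
      rw [map_smul]
      simp only [LinearMap.smul_apply, map_smul, Submodule.coe_smul, smul_smul]
      rw [mul_comm b a]
    rw [hjsc] at hKey
    simp only [map_smul, LinearMap.smul_apply, smul_eq_mul] at hKey
    have hKey2 : (|s|⁻¹ * |u|⁻¹) * B ((j z x : V) : n) ((j z x : V) : n)
        = (|s|⁻¹ * |u|⁻¹) * (4 * c * s * u) := by
      calc (|s|⁻¹ * |u|⁻¹) * B ((j z x : V) : n) ((j z x : V) : n)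
          = (a * a) * (b * b) * B ((j z x : V) : n) ((j z x : V) : n) := by
            rw [hsa, hub]
        _ = a * b * (a * b * B ((j z x : V) : n) ((j z x : V) : n)) := by ring
        _ = 4 * c * (|s|⁻¹ * s) * (|u|⁻¹ * u) := hKey
        _ = (|s|⁻¹ * |u|⁻¹) * (4 * c * s * u) := by ring
    exact mul_left_cancel₀ (mul_ne_zero (inv_ne_zero habs) (inv_ne_zero hubs)) hKey2
  -- case: z anisotropic, x arbitrary
  have hanyx : ∀ (z : Z) (x : V), B (z : n) (z : n) ≠ 0 →
      B ((j z x : V) : n) ((j z x : V) : n) = 4 * c * B (z : n) (z : n) * B (x : n) (x : n) := by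
    intro z x hz
    by_cases hx : B (x : n) (x : n) ≠ 0
    · exact hbothunit z x hz hx
    push_neg at hx
    by_cases hVex : ∃ y : V, B (y : n) (y : n) ≠ 0
    · obtain ⟨y, hy⟩ := hVex
      have key : ∀ t : ℝ, t ≠ 0 → 2 * B (x : n) (y : n) + t * B (y : n) (y : n) ≠ 0 →
          B ((j z x : V) : n) ((j z x : V) : n)
            + t * (2 * B ((j z x : V) : n) ((j z y : V) : n)
              - 4 * c * B (z : n) (z : n) * (2 * B (x : n) (y : n))) = 0 := by
        intro t ht hgood
        have hu : B ((x + t • y : V) : n) ((x + t • y : V) : n)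
            = t * (2 * B (x : n) (y : n) + t * B (y : n) (y : n)) := by
          simp only [Submodule.coe_add, Submodule.coe_smul]
          rw [hexpand]
          simp only [map_smul, LinearMap.smul_apply, smul_eq_mul]
          rw [hx]; ring
        have h1 := hbothunit z (x + t • y) hz (by rw [hu]; exact mul_ne_zero ht hgood)
        have h2 := hbothunit z y hz hy
        simp only [map_add, Submodule.coe_add, Submodule.coe_smul, map_smul,
          LinearMap.add_apply, LinearMap.smul_apply, smul_eq_mul] at h1
        have hs1 := hBsymm ((j z y : V) : n) ((j z x : V) : n)
        have hs2 := hBsymm (y : n) (x : n)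
        linear_combination h1 - t * t * h2 - t * hs1
          + 4 * c * B (z : n) (z : n) * hx + 4 * c * B (z : n) (z : n) * t * hs2
      obtain ⟨t1, t2, h12, ht1, ht2, hg1, hg2⟩ :=
        hpick (2 * B (x : n) (y : n)) (B (y : n) (y : n)) hy
      have k1 := key t1 ht1 hg1
      have k2 := key t2 ht2 hg2
      have hC : 2 * B ((j z x : V) : n) ((j z y : V) : n)
          - 4 * c * B (z : n) (z : n) * (2 * B (x : n) (y : n)) = 0 := by
        have hsub : (t1 - t2) * (2 * B ((j z x : V) : n) ((j z y : V) : n)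
            - 4 * c * B (z : n) (z : n) * (2 * B (x : n) (y : n))) = 0 := by
          linear_combination k1 - k2
        exact (mul_eq_zero.mp hsub).resolve_left (sub_ne_zero.mpr h12)
      rw [hC, mul_zero, add_zero] at k1
      rw [hx, k1]; ring
    · have hx0 : x = 0 := hzero V hVnd hVex x
      rw [hx0]
      simp
  -- full identity for all z, x
  have hfull : ∀ (z : Z) (x : V),
      B ((j z x : V) : n) ((j z x : V) : n) = 4 * c * B (z : n) (z : n) * B (x : n) (x : n) := by
    intro z x
    by_cases hz : B (z : n) (z : n) ≠ 0
    · exact hanyx z x hz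
    push_neg at hz
    by_cases hZex : ∃ w : Z, B (w : n) (w : n) ≠ 0
    · obtain ⟨w, hw⟩ := hZex
      have key : ∀ t : ℝ, t ≠ 0 → 2 * B (z : n) (w : n) + t * B (w : n) (w : n) ≠ 0 →
          B ((j z x : V) : n) ((j z x : V) : n)
            + t * (2 * B ((j z x : V) : n) ((j w x : V) : n)
              - 4 * c * (2 * B (z : n) (w : n)) * B (x : n) (x : n)) = 0 := by
        intro t ht hgood
        have hu : B ((z + t • w : Z) : n) ((z + t • w : Z) : n)
            = t * (2 * B (z : n) (w : n) + t * B (w : n) (w : n)) := by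
          simp only [Submodule.coe_add, Submodule.coe_smul]
          rw [hexpand]
          simp only [map_smul, LinearMap.smul_apply, smul_eq_mul]
          rw [hz]; ring
        have h1 := hanyx (z + t • w) x (by rw [hu]; exact mul_ne_zero ht hgood)
        have h2 := hanyx w x hw
        simp only [map_add, Submodule.coe_add, Submodule.coe_smul, map_smul,
          LinearMap.add_apply, LinearMap.smul_apply, smul_eq_mul] at h1
        have hs1 := hBsymm ((j w x : V) : n) ((j z x : V) : n)
        have hs2 := hBsymm ((w : Z) : n) ((z : Z) : n)
        linear_combination h1 - t * t * h2 - t * hs1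
          + 4 * c * B (x : n) (x : n) * hz + 4 * c * t * B (x : n) (x : n) * hs2
      obtain ⟨t1, t2, h12, ht1, ht2, hg1, hg2⟩ :=
        hpick (2 * B (z : n) (w : n)) (B (w : n) (w : n)) hw
      have k1 := key t1 ht1 hg1
      have k2 := key t2 ht2 hg2
      have hC : 2 * B ((j z x : V) : n) ((j w x : V) : n)
          - 4 * c * (2 * B (z : n) (w : n)) * B (x : n) (x : n) = 0 := by
        have hsub : (t1 - t2) * (2 * B ((j z x : V) : n) ((j w x : V) : n)
            - 4 * c * (2 * B (z : n) (w : n)) * B (x : n) (x : n)) = 0 := by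
          linear_combination k1 - k2
        exact (mul_eq_zero.mp hsub).resolve_left (sub_ne_zero.mpr h12)
      rw [hC, mul_zero, add_zero] at k1
      rw [hz, k1]; ring
    · have hz0 : z = 0 := hzero Z hZnd hZex z
      rw [hz0]
      simp
  -- polarization in x
  have hpolar : ∀ (z : Z) (x y : V),
      B ((j z x : V) : n) ((j z y : V) : n)
        = 4 * c * B (z : n) (z : n) * B (x : n) (y : n) := by
    intro z x y
    have h1 := hfull z (x + y)
    have h2 := hfull z x
    have h3 := hfull z y
    have hs1 := hBsymm ((j z y : V) : n) ((j z x : V) : n)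
    have hs2 := hBsymm (y : n) (x : n)
    simp only [map_add, Submodule.coe_add, LinearMap.add_apply] at h1
    linear_combination (h1 - h2 - h3 - hs1 + 4 * c * B (z : n) (z : n) * hs2) / 2
  -- conclusion
  intro z
  apply LinearMap.ext
  intro x
  have h0 : (j z (j z x) - (-(4 * c * B (z : n) (z : n))) • x : V) = 0 := by
    apply hVnd.1
    intro y
    have hc : (((j z (j z x) - (-(4 * c * B (z : n) (z : n))) • x : V)) : n)
        = ((j z (j z x) : V) : n) - (-(4 * c * B (z : n) (z : n))) • ((x : V) : n) := by
      simp [Submodule.coe_sub, Submodule.coe_smul]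
    show B (((j z (j z x) - (-(4 * c * B (z : n) (z : n))) • x : V)) : n) (y : n) = 0
    rw [hc]
    simp only [map_sub, LinearMap.sub_apply, map_smul, LinearMap.smul_apply, smul_eq_mul]
    have h1 := hskew z x y
    have h2 := hpolar z x y
    linear_combination h1 - h2
  have h1 := sub_eq_zero.mp h0
  simpa only [LinearMap.comp_apply, LinearMap.smul_apply, LinearMap.id_apply] using h1
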